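/- Fix reals X > 0, c > 0, P > 0, m ∈ ℝ, a > 0, and n ∈ ℤ with n ≥ 1. Let F(z) := Σ_{l∈ℤ} (X/(√(2π)·c))·exp(−(z + l·P − m)²/(2c²)) for z ∈ ℂ. Then |∫₀^P F(x − i·a)·exp(−2πi·n·(x − i·a)/P) dx| ≤ X·exp(a²/(2c²))·exp(−2π·n·a/P). -/

import Mathlib

open MeasureTheory Set

lemma abs_exp_decomp (r s : ℝ) :
    ‖Complex.exp ((r:ℂ) + (s:ℂ)*Complex.I)‖ = Real.exp r := by
  rw [Complex.exp_add, norm_mul, Complex.norm_exp_ofReal, Complex.norm_exp_ofReal_mul_I, mul_one]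

lemma gauss_exponent (u a c : ℝ) (hc : c ≠ 0) :
    -((u:ℂ) - Complex.I*(a:ℂ))^2 / (2*(c:ℂ)^2)
      = (((a^2 - u^2)/(2*c^2) : ℝ) : ℂ) + ((u*a/c^2 : ℝ):ℂ) * Complex.I := by
  have h : (c:ℂ) ≠ 0 := by exact_mod_cast hc
  push_cast
  field_simp
  linear_combination (-(a:ℂ)^2) * Complex.I_sq

lemma osc_exponent (P x a : ℝ) (n : ℤ) (hP : P ≠ 0) :
    -2*(Real.pi:ℂ)*Complex.I*(n:ℂ)*((x:ℂ) - Complex.I*(a:ℂ))/(P:ℂ)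
      = ((-2*Real.pi*(n:ℝ)*a/P : ℝ):ℂ) + ((-2*Real.pi*(n:ℝ)*x/P : ℝ):ℂ)*Complex.I := by
  have h : (P:ℂ) ≠ 0 := by exact_mod_cast hP
  push_cast
  field_simp
  linear_combination ((n:ℂ)*(a:ℂ)) * Complex.I_sq

lemma norm_term_aux (C c P m a : ℝ) (n l : ℤ) (x : ℝ) (hc : 0 < c) (hP : 0 < P) (hC : 0 ≤ C) :
    ‖(C:ℂ) * Complex.exp (-((x:ℂ) - Complex.I*(a:ℂ) + (l:ℂ)*(P:ℂ) - (m:ℂ))^2/(2*(c:ℂ)^2)) *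
      Complex.exp (-2*(Real.pi:ℂ)*Complex.I*(n:ℂ)*((x:ℂ) - Complex.I*(a:ℂ))/(P:ℂ))‖
    = C * Real.exp (a^2/(2*c^2)) * Real.exp (-2*Real.pi*(n:ℝ)*a/P) *
        Real.exp (-(x + ((l:ℝ)*P - m))^2/(2*c^2)) := by
  set u : ℝ := x + ((l:ℝ) * P - m) with hu
  have hz : (x:ℂ) - Complex.I*(a:ℂ) + (l:ℂ)*(P:ℂ) - (m:ℂ) = (u:ℂ) - Complex.I*(a:ℂ) := by
    rw [hu]; push_cast; ring
  rw [norm_mul, norm_mul, hz, gauss_exponent u a c hc.ne', osc_exponent P x a n hP.ne',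
      abs_exp_decomp,
      abs_exp_decomp, Complex.norm_real, Real.norm_eq_abs, abs_of_nonneg hC]
  rw [show (a^2 - u^2)/(2*c^2) = a^2/(2*c^2) + -u^2/(2*c^2) by ring, Real.exp_add]
  ring



/-- Horizontal-line estimate for the complex extension of the `P`-periodized
Gaussian pulse: the integral along `Im z = -a` of `F(z)·e^{-2πinz/P}` has modulus at most
`X·e^{a²/(2c²)}·e^{-2πna/P}`. -/
theorem horizontal_line_estimate (X c P m a : ℝ) (hX : 0 < X) (hc : 0 < c) (hP : 0 < P)
    (ha : 0 < a) (n : ℤ) (hn : 1 ≤ n)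
    (F : ℂ → ℂ)
    (hF : ∀ z : ℂ, F z = ∑' l : ℤ,
      ((X / (Real.sqrt (2 * Real.pi) * c) : ℝ) : ℂ) *
        Complex.exp (-(z + (l : ℂ) * (P : ℂ) - (m : ℂ)) ^ 2 / (2 * (c : ℂ) ^ 2))) :
    ‖∫ x in (0:ℝ)..P, F ((x : ℂ) - Complex.I * (a : ℂ)) *
        Complex.exp (-2 * Real.pi * Complex.I * (n : ℂ) *
          ((x : ℂ) - Complex.I * (a : ℂ)) / (P : ℂ))‖
      ≤ X * Real.exp (a ^ 2 / (2 * c ^ 2)) * Real.exp (-2 * Real.pi * (n : ℝ) * a / P) := by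
  have hsqrt : 0 < Real.sqrt (2 * Real.pi) := Real.sqrt_pos.mpr (by positivity)
  set C : ℝ := X / (Real.sqrt (2 * Real.pi) * c) with hCdef
  have hC : 0 < C := div_pos hX (mul_pos hsqrt hc)
  set K : ℝ := Real.exp (a ^ 2 / (2 * c ^ 2)) with hK
  set E : ℝ := Real.exp (-2 * Real.pi * (n : ℝ) * a / P) with hE
  set φ : ℝ → ℝ := fun y => Real.exp (-y ^ 2 / (2 * c ^ 2)) with hφdef
  -- the Gaussian is integrable with total mass √(2π)·c
  have hφ_eq : (fun x : ℝ => Real.exp (-(1 / (2 * c ^ 2)) * x ^ 2)) = φ := by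
    funext x; rw [hφdef]; ring_nf
  have hφ_int : Integrable φ := by
    rw [← hφ_eq]; exact integrable_exp_neg_mul_sq (by positivity)
  have hφ_val : (∫ y, φ y) = Real.sqrt (2 * Real.pi) * c := by
    have h := integral_gaussian (1 / (2 * c ^ 2))
    rw [hφ_eq] at h
    rw [h, show Real.pi / (1 / (2 * c ^ 2)) = 2 * Real.pi * c ^ 2 by field_simp,
      Real.sqrt_mul (by positivity), Real.sqrt_sq hc.le]
  -- the shifted intervals tile ℝ
  have hHS : HasSum (fun l : ℤ => ∫ y in Ioc (-m + l • P) (-m + (l + 1) • P), φ y)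
      (Real.sqrt (2 * Real.pi) * c) := by
    rw [← hφ_val, ← setIntegral_univ (f := φ), ← iUnion_Ioc_add_zsmul hP (-m)]
    refine MeasureTheory.hasSum_integral_iUnion (fun l => measurableSet_Ioc) ?_ ?_
    · exact pairwise_disjoint_Ioc_add_zsmul (-m) P
    · exact hφ_int.integrableOn
  -- change of variables on each tile
  have hchg : ∀ l : ℤ, ∫ x in Ioc (0:ℝ) P, φ (x + ((l:ℝ) * P - m))
      = ∫ y in Ioc (-m + l • P) (-m + (l + 1) • P), φ y := by
    intro l
    have e1 : -m + l • P = 0 + ((l:ℝ) * P - m) := by rw [zsmul_eq_mul]; ring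
    have e2 : -m + (l + 1) • P = P + ((l:ℝ) * P - m) := by rw [zsmul_eq_mul]; push_cast; ring
    rw [e1, e2, ← intervalIntegral.integral_of_le (by linarith : (0:ℝ) + ((l:ℝ)*P - m) ≤ P + ((l:ℝ)*P - m)),
      ← intervalIntegral.integral_comp_add_right φ ((l:ℝ) * P - m),
      intervalIntegral.integral_of_le hP.le]
  -- the summands
  set T : ℤ → ℝ → ℂ := fun l x =>
    (C:ℂ) * Complex.exp (-((x:ℂ) - Complex.I*(a:ℂ) + (l:ℂ)*(P:ℂ) - (m:ℂ))^2/(2*(c:ℂ)^2)) *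
      Complex.exp (-2*(Real.pi:ℂ)*Complex.I*(n:ℂ)*((x:ℂ) - Complex.I*(a:ℂ))/(P:ℂ)) with hT
  have hnormT : ∀ (l : ℤ) (x : ℝ), ‖T l x‖ = C * K * E * φ (x + ((l:ℝ) * P - m)) := by
    intro l x
    rw [hT]
    exact norm_term_aux C c P m a n l x hc hP hC.le
  have hcont : ∀ l : ℤ, Continuous (T l) := by
    intro l
    rw [hT]
    fun_prop
  have hTint : ∀ l : ℤ, Integrable (T l) (volume.restrict (Ioc 0 P)) := fun l =>
    ((hcont l).integrableOn_Ioc)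
  have hintnorm : ∀ l : ℤ, ∫ x in Ioc (0:ℝ) P, ‖T l x‖
      = C * K * E * ∫ y in Ioc (-m + l • P) (-m + (l + 1) • P), φ y := by
    intro l
    rw [← hchg l]
    simp_rw [hnormT l]
    rw [MeasureTheory.integral_const_mul]
  have hsumint : Summable fun l : ℤ => ∫ x in Ioc (0:ℝ) P, ‖T l x‖ := by
    refine Summable.congr (hHS.summable.mul_left (C * K * E)) fun l => (hintnorm l).symm
  have hfun : ∀ x : ℝ, F ((x : ℂ) - Complex.I * (a : ℂ)) *
      Complex.exp (-2 * Real.pi * Complex.I * (n : ℂ) * ((x : ℂ) - Complex.I * (a : ℂ)) / (P : ℂ))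
      = ∑' l : ℤ, T l x := by
    intro x
    rw [hF, ← tsum_mul_right]
  rw [intervalIntegral.integral_of_le hP.le]
  have hswap : (∫ x in Ioc (0:ℝ) P, F ((x : ℂ) - Complex.I * (a : ℂ)) *
      Complex.exp (-2 * Real.pi * Complex.I * (n : ℂ) * ((x : ℂ) - Complex.I * (a : ℂ)) / (P : ℂ)))
      = ∑' l : ℤ, ∫ x in Ioc (0:ℝ) P, T l x := by
    simp_rw [hfun]
    exact (MeasureTheory.integral_tsum_of_summable_integral_norm hTint hsumint).symm
  rw [hswap]
  have hsummable2 : Summable fun l : ℤ => ‖∫ x in Ioc (0:ℝ) P, T l x‖ :=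
    Summable.of_nonneg_of_le (fun l => norm_nonneg _)
      (fun l => norm_integral_le_integral_norm _) hsumint
  calc ‖∑' l : ℤ, ∫ x in Ioc (0:ℝ) P, T l x‖
      ≤ ∑' l : ℤ, ‖∫ x in Ioc (0:ℝ) P, T l x‖ := norm_tsum_le_tsum_norm hsummable2
    _ ≤ ∑' l : ℤ, ∫ x in Ioc (0:ℝ) P, ‖T l x‖ :=
        hsummable2.tsum_le_tsum (fun l => norm_integral_le_integral_norm _) hsumint
    _ = ∑' l : ℤ, C * K * E * ∫ y in Ioc (-m + l • P) (-m + (l + 1) • P), φ y := by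
        exact tsum_congr hintnorm
    _ = C * K * E * (Real.sqrt (2 * Real.pi) * c) := by
        rw [tsum_mul_left, hHS.tsum_eq]
    _ = X * K * E := by
        rw [hCdef]; field_simp
    _ = X * K * E := rfl
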